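/- In the Set Cover reduction graph with seed set S = {s}, for every index set I ⊆ {1, …, m} and boost set B = {c_i : i ∈ I}, the boosted influence spread satisfies σ_{{s}}(B) = 1 + |I| + (m − |I|)/2 + |{j : e_j ∈ ⋃_{i∈I} C_i}| + ∑_{j : e_j ∉ ⋃_{i∈I} C_i} (1 − 2^{−d_j}), where d_j = |{i : e_j ∈ C_i}|. -/

import Mathlib

open Finset
open scoped Classical

noncomputable section

variable {V : Type*}

/-- The probability weight of the live-edge configuration `L ⊆ E`:
each edge `e ∈ E` is independently live with probability `p e`. -/
def edgeWeight [DecidableEq V] (E : Finset (V × V)) (p : V × V → ℝ)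
    (L : Finset (V × V)) : ℝ :=
  (∏ e ∈ L, p e) * ∏ e ∈ E \ L, (1 - p e)

/-- `v` is activated in configuration `L`: it is reachable from some seed in `S`
through live (directed) edges. -/
def Reaches (L : Finset (V × V)) (S : Finset V) (v : V) : Prop :=
  ∃ s ∈ S, Relation.ReflTransGen (fun a b => (a, b) ∈ L) s v

/-- Activation probability of node `v` under the live-edge model with edge set `E`,
edge probabilities `p`, and seed set `S`. -/
def ap [Fintype V] [DecidableEq V] (E : Finset (V × V)) (p : V × V → ℝ)
    (S : Finset V) (v : V) : ℝ :=
  ∑ L ∈ E.powerset, edgeWeight E p L * (if Reaches L S v then 1 else 0)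

/-- Expected number of activated nodes lying in the node set `W`. -/
def spreadOn [Fintype V] [DecidableEq V] (E : Finset (V × V)) (p : V × V → ℝ)
    (S W : Finset V) : ℝ :=
  ∑ L ∈ E.powerset, edgeWeight E p L * ((W.filter (fun v => Reaches L S v)).card : ℝ)

/-- The influence spread `σ_S`: expected total number of activated nodes. -/
def spread [Fintype V] [DecidableEq V] (E : Finset (V × V)) (p : V × V → ℝ)
    (S : Finset V) : ℝ :=
  spreadOn E p S Finset.univ

/-- Boosted edge probabilities: edges pointing into a boosted node use `p'`. -/
def pB (p p' : V × V → ℝ) (B : Finset V) : V × V → ℝ :=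
  fun e => if e.2 ∈ B then p' e else p e

/-- The bidirected edge set of an undirected graph: each undirected edge is
replaced by the two directed edges. -/
def treeEdges [Fintype V] [DecidableEq V] (T : SimpleGraph V) [DecidableRel T.Adj] :
    Finset (V × V) :=
  Finset.univ.filter (fun e => T.Adj e.1 e.2)

/-- `apSub E p S v u` is `ap_B(v\u)`: the activation probability of `v` in the
subtree `G_{v\u}` obtained by removing the directed edges `(u,v)` and `(v,u)`. -/
def apSub [Fintype V] [DecidableEq V] (E : Finset (V × V)) (p : V × V → ℝ)
    (S : Finset V) (v u : V) : ℝ :=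
  ap (E \ {(u, v), (v, u)}) p S v

/-- The set of nodes of the connected component containing `v` w.r.t. edge set `E`. -/
def comp [Fintype V] [DecidableEq V] (E : Finset (V × V)) (v : V) : Finset V :=
  Finset.univ.filter (fun w => Relation.ReflTransGen (fun a b => (a, b) ∈ E) v w)

/-- `gain E p S v u` is `g_B(v\u)`: in the subtree `G_{v\u}`, the expected number of
activated nodes when the seed set is `(S ∩ V(G_{v\u})) ∪ {v}` minus the expected
number when the seed set is `S ∩ V(G_{v\u})`. -/
def gain [Fintype V] [DecidableEq V] (E : Finset (V × V)) (p : V × V → ℝ)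
    (S : Finset V) (v u : V) : ℝ :=
  spreadOn (E \ {(u, v), (v, u)}) p (insert v (S ∩ comp (E \ {(u, v), (v, u)}) v))
      (comp (E \ {(u, v), (v, u)}) v)
    - spreadOn (E \ {(u, v), (v, u)}) p (S ∩ comp (E \ {(u, v), (v, u)}) v)
      (comp (E \ {(u, v), (v, u)}) v)


section Helpers

lemma edgeWeight_total [DecidableEq V] (E : Finset (V × V)) (p : V × V → ℝ) :
    ∑ L ∈ E.powerset, edgeWeight E p L = 1 := by
  have h := Finset.prod_add p (fun e => 1 - p e) E
  simp only [add_sub_cancel, Finset.prod_const_one] at h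
  simpa [edgeWeight] using h.symm

lemma sum_powerset_union_disjoint [DecidableEq V] {A B : Finset (V × V)}
    (hAB : Disjoint A B) (f : Finset (V × V) → ℝ) :
    ∑ L ∈ (A ∪ B).powerset, f L = ∑ a ∈ A.powerset, ∑ b ∈ B.powerset, f (a ∪ b) := by
  have : ∑ L ∈ (A ∪ B).powerset, f L
      = ∑ x ∈ A.powerset ×ˢ B.powerset, f (x.1 ∪ x.2) := by
    refine Finset.sum_nbij' (i := fun L => (L ∩ A, L ∩ B)) (j := fun x => x.1 ∪ x.2) ?_ ?_ ?_ ?_ ?_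
    · intro L hL
      simp only [Finset.mem_powerset] at hL
      simp [Finset.mem_product, Finset.inter_subset_right]
    · intro x hx
      simp only [Finset.mem_product, Finset.mem_powerset] at hx
      exact Finset.mem_coe.2 (Finset.mem_powerset.2 (Finset.union_subset_union hx.1 hx.2))
    · intro L hL
      simp only [Finset.mem_powerset] at hL
      show L ∩ A ∪ L ∩ B = L
      rw [← Finset.inter_union_distrib_left, Finset.inter_eq_left.2 hL]
    · intro x hx
      simp only [Finset.mem_product, Finset.mem_powerset] at hx
      have h1 : x.1 ∩ A = x.1 := Finset.inter_eq_left.2 hx.1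
      have h2 : x.2 ∩ B = x.2 := Finset.inter_eq_left.2 hx.2
      have h3 : x.2 ∩ A = ∅ := Finset.eq_empty_of_forall_notMem fun e he => by
        simp only [Finset.mem_inter] at he
        exact (Finset.disjoint_right.1 hAB (hx.2 he.1)) he.2
      have h4 : x.1 ∩ B = ∅ := Finset.eq_empty_of_forall_notMem fun e he => by
        simp only [Finset.mem_inter] at he
        exact (Finset.disjoint_left.1 hAB (hx.1 he.1)) he.2
      ext <;> simp [Finset.union_inter_distrib_right, h1, h2, h3, h4]
    · intro L hL
      simp only [Finset.mem_powerset] at hL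
      show f L = f (L ∩ A ∪ L ∩ B)
      rw [← Finset.inter_union_distrib_left, Finset.inter_eq_left.2 hL]
  rw [this, Finset.sum_product]

lemma edgeWeight_union [DecidableEq V] {A B a b : Finset (V × V)} (hAB : Disjoint A B)
    (ha : a ⊆ A) (hb : b ⊆ B) (p : V × V → ℝ) :
    edgeWeight (A ∪ B) p (a ∪ b) = edgeWeight A p a * edgeWeight B p b := by
  have hab : Disjoint a b := hAB.mono ha hb
  have hsd : (A ∪ B) \ (a ∪ b) = (A \ a) ∪ (B \ b) := by
    ext e
    simp only [Finset.mem_sdiff, Finset.mem_union, not_or]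
    constructor
    · rintro ⟨h1 | h1, h2, h3⟩
      · exact Or.inl ⟨h1, h2⟩
      · exact Or.inr ⟨h1, h3⟩
    · rintro (⟨h1, h2⟩ | ⟨h1, h2⟩)
      · exact ⟨Or.inl h1, h2, fun hc => (Finset.disjoint_left.1 hAB h1) (hb hc)⟩
      · exact ⟨Or.inr h1, fun hc => (Finset.disjoint_right.1 hAB h1) (ha hc), h2⟩
  have hsd2 : Disjoint (A \ a) (B \ b) :=
    (hAB.mono (Finset.sdiff_subset) (Finset.sdiff_subset))
  unfold edgeWeight
  rw [Finset.prod_union hab, hsd, Finset.prod_union hsd2]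
  ring

lemma sum_edgeWeight_union [DecidableEq V] {A B : Finset (V × V)} (hAB : Disjoint A B)
    (p : V × V → ℝ) (f : Finset (V × V) → ℝ) :
    ∑ L ∈ (A ∪ B).powerset, edgeWeight (A ∪ B) p L * f L
      = ∑ a ∈ A.powerset, ∑ b ∈ B.powerset,
          edgeWeight A p a * edgeWeight B p b * f (a ∪ b) := by
  rw [sum_powerset_union_disjoint hAB]
  refine Finset.sum_congr rfl fun a ha => Finset.sum_congr rfl fun b hb => ?_
  rw [edgeWeight_union hAB (Finset.mem_powerset.1 ha) (Finset.mem_powerset.1 hb)]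

lemma marginal [DecidableEq V] {E F : Finset (V × V)} (hFE : F ⊆ E) (p : V × V → ℝ)
    (g : Finset (V × V) → ℝ) (hg : ∀ L, g L = g (L ∩ F)) :
    ∑ L ∈ E.powerset, edgeWeight E p L * g L
      = ∑ K ∈ F.powerset, edgeWeight F p K * g K := by
  have hE : E = F ∪ (E \ F) := (Finset.union_sdiff_of_subset hFE).symm
  have hd : Disjoint F (E \ F) := Finset.disjoint_sdiff
  rw [hE, sum_edgeWeight_union hd]
  refine Finset.sum_congr rfl fun a ha => ?_
  have ha' := Finset.mem_powerset.1 ha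
  have : ∀ b ∈ (E \ F).powerset,
      edgeWeight F p a * edgeWeight (E \ F) p b * g (a ∪ b)
        = edgeWeight (E \ F) p b * (edgeWeight F p a * g a) := by
    intro b hb
    have hb' := Finset.mem_powerset.1 hb
    have hbF : b ∩ F = ∅ := Finset.eq_empty_of_forall_notMem (fun e he => by
      simp only [Finset.mem_inter] at he
      exact (Finset.mem_sdiff.1 (hb' he.1)).2 he.2)
    have : g (a ∪ b) = g a := by
      rw [hg (a ∪ b), Finset.union_inter_distrib_right,
        Finset.inter_eq_left.2 ha', hbF, Finset.union_empty]
    rw [this]; ring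
  rw [Finset.sum_congr rfl this, ← Finset.sum_mul, edgeWeight_total, one_mul]

lemma prod_split [DecidableEq V] {ι : Type*} [DecidableEq ι] (T : Finset ι)
    (F : ι → Finset (V × V)) (hdisj : (T : Set ι).PairwiseDisjoint F) (p : V × V → ℝ)
    (g : ι → Finset (V × V) → ℝ) (hg : ∀ i ∈ T, ∀ L, g i L = g i (L ∩ F i)) :
    ∑ L ∈ (T.biUnion F).powerset, edgeWeight (T.biUnion F) p L * ∏ i ∈ T, g i L
      = ∏ i ∈ T, ∑ K ∈ (F i).powerset, edgeWeight (F i) p K * g i K := by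
  induction T using Finset.induction with
  | empty => simp [edgeWeight]
  | @insert i T hiT ih =>
    have hdisj' : (T : Set ι).PairwiseDisjoint F :=
      hdisj.subset (by simp [Finset.coe_insert, Set.subset_insert])
    have hd : Disjoint (F i) (T.biUnion F) := by
      rw [Finset.disjoint_biUnion_right]
      intro j hj
      exact hdisj (by simp) (by simp [hj]) (by rintro rfl; exact hiT hj)
    rw [Finset.biUnion_insert, sum_edgeWeight_union hd]
    have key : ∀ a ∈ (F i).powerset, ∀ b ∈ (T.biUnion F).powerset,
        edgeWeight (F i) p a * edgeWeight (T.biUnion F) p b * ∏ k ∈ insert i T, g k (a ∪ b)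
          = (edgeWeight (F i) p a * g i a) *
            (edgeWeight (T.biUnion F) p b * ∏ k ∈ T, g k b) := by
      intro a ha b hb
      have ha' := Finset.mem_powerset.1 ha
      have hb' := Finset.mem_powerset.1 hb
      have hgi : g i (a ∪ b) = g i a := by
        have hbFi : b ∩ F i = ∅ := Finset.eq_empty_of_forall_notMem (fun e he => by
          simp only [Finset.mem_inter] at he
          exact (Finset.disjoint_right.1 hd (hb' he.1)) he.2)
        rw [hg i (Finset.mem_insert_self i T) (a ∪ b), Finset.union_inter_distrib_right,
          Finset.inter_eq_left.2 ha', hbFi, Finset.union_empty]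
      have hgk : ∀ k ∈ T, g k (a ∪ b) = g k b := by
        intro k hk
        have hdk : Disjoint (F i) (F k) :=
          hdisj (by simp) (by simp [hk]) (by rintro rfl; exact hiT hk)
        have haFk : a ∩ F k = ∅ := Finset.eq_empty_of_forall_notMem (fun e he => by
          simp only [Finset.mem_inter] at he
          exact (Finset.disjoint_left.1 hdk (ha' he.1)) he.2)
        have hk' : k ∈ insert i T := Finset.mem_insert_of_mem hk
        rw [hg k hk' (a ∪ b), Finset.union_inter_distrib_right, haFk, Finset.empty_union,
          ← hg k hk' b]
      rw [Finset.prod_insert hiT, hgi, Finset.prod_congr rfl hgk]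
      ring
    calc ∑ a ∈ (F i).powerset, ∑ b ∈ (T.biUnion F).powerset,
          edgeWeight (F i) p a * edgeWeight (T.biUnion F) p b * ∏ k ∈ insert i T, g k (a ∪ b)
        = ∑ a ∈ (F i).powerset, (edgeWeight (F i) p a * g i a) *
            ∑ b ∈ (T.biUnion F).powerset,
              (edgeWeight (T.biUnion F) p b * ∏ k ∈ T, g k b) := by
          refine Finset.sum_congr rfl fun a ha => ?_
          rw [Finset.mul_sum]
          exact Finset.sum_congr rfl fun b hb => key a ha b hb
      _ = ∏ k ∈ insert i T, ∑ K ∈ (F k).powerset, edgeWeight (F k) p K * g k K := by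
          rw [← Finset.sum_mul, ih hdisj' (fun k hk => hg k (Finset.mem_insert_of_mem hk)),
            Finset.prod_insert hiT]

lemma sum_singleton_edge [DecidableEq V] (e : V × V) (p : V × V → ℝ)
    (g : Finset (V × V) → ℝ) :
    ∑ K ∈ ({e} : Finset (V × V)).powerset, edgeWeight {e} p K * g K
      = (1 - p e) * g ∅ + p e * g {e} := by
  have hps : ({e} : Finset (V × V)).powerset = {∅, {e}} := by
    ext t; simp [Finset.subset_singleton_iff]
  rw [hps, Finset.sum_pair (Finset.singleton_ne_empty e).symm]
  simp [edgeWeight]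

lemma sum_pair_edges [DecidableEq V] (e1 e2 : V × V) (hne : e1 ≠ e2) (p : V × V → ℝ) :
    ∑ K ∈ ({e1, e2} : Finset (V × V)).powerset, edgeWeight {e1, e2} p K *
        (if e1 ∈ K ∧ e2 ∈ K then (1 : ℝ) else 0)
      = p e1 * p e2 := by
  have hd : Disjoint ({e1} : Finset (V × V)) {e2} := by simp [Ne.symm hne, hne]
  rw [show ({e1, e2} : Finset (V × V)) = {e1} ∪ {e2} by ext x; simp,
    sum_edgeWeight_union hd]
  have : ∀ a ∈ ({e1} : Finset (V × V)).powerset,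
      ∑ b ∈ ({e2} : Finset (V × V)).powerset,
          edgeWeight {e1} p a * edgeWeight {e2} p b *
            (if e1 ∈ a ∪ b ∧ e2 ∈ a ∪ b then (1:ℝ) else 0)
        = edgeWeight {e1} p a *
            ∑ b ∈ ({e2} : Finset (V × V)).powerset, edgeWeight {e2} p b *
              (if e1 ∈ a ∪ b ∧ e2 ∈ a ∪ b then (1:ℝ) else 0) := by
    intro a _
    rw [Finset.mul_sum]
    exact Finset.sum_congr rfl fun b _ => by ring
  rw [Finset.sum_congr rfl this,
    sum_singleton_edge e1 p (fun a => ∑ b ∈ ({e2} : Finset (V × V)).powerset,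
      edgeWeight {e2} p b * (if e1 ∈ a ∪ b ∧ e2 ∈ a ∪ b then (1:ℝ) else 0))]
  rw [sum_singleton_edge e2 p, sum_singleton_edge e2 p]
  simp [hne, Ne.symm hne]

end Helpers

/-- Node type of the Set Cover reduction graph: the seed `s`, the set-nodes
`c_1, …, c_m`, and the element-nodes `x_1, …, x_n`. -/
abbrev SCNode (m n : ℕ) := Unit ⊕ (Fin m ⊕ Fin n)

def sNode {m n : ℕ} : SCNode m n := Sum.inl ()

def cNode {m n : ℕ} (i : Fin m) : SCNode m n := Sum.inr (Sum.inl i)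

def xNode {m n : ℕ} (j : Fin n) : SCNode m n := Sum.inr (Sum.inr j)

/-- Edges of the Set Cover reduction graph: `(s, c_i)` for every `i`, and
`(c_i, x_j)` whenever `e_j ∈ C_i`. -/
def scEdges (m n : ℕ) (C : Fin m → Finset (Fin n)) :
    Finset (SCNode m n × SCNode m n) :=
  (Finset.univ.image fun i : Fin m => (sNode, cNode i)) ∪
    (((Finset.univ : Finset (Fin m × Fin n)).filter fun ij => ij.2 ∈ C ij.1).image
      fun ij => (cNode ij.1, xNode ij.2))

/-- Influence probabilities: `1/2` on edges into the `c_i`'s, `1` on edges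
into the `x_j`'s. -/
def scP (m n : ℕ) : SCNode m n × SCNode m n → ℝ :=
  fun e => match e.2 with
  | Sum.inr (Sum.inl _) => 1 / 2
  | _ => 1

/-- Boosted influence probabilities: `1` on every edge. -/
def scP' (m n : ℕ) : SCNode m n × SCNode m n → ℝ := fun _ => 1

/-- In-degree `d_j` of the element node `x_j`: number of sets containing `e_j`. -/
def scDeg {m n : ℕ} (C : Fin m → Finset (Fin n)) (j : Fin n) : ℕ :=
  (Finset.univ.filter fun i : Fin m => j ∈ C i).card


section SCLemmas

variable {m n : ℕ} {C : Fin m → Finset (Fin n)}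

lemma mem_scEdges {a b : SCNode m n} :
    (a, b) ∈ scEdges m n C ↔
      (∃ i, a = sNode ∧ b = cNode i) ∨ ∃ i j, j ∈ C i ∧ a = cNode i ∧ b = xNode j := by
  simp only [scEdges, Finset.mem_union, Finset.mem_image, Finset.mem_filter, Finset.mem_univ,
    true_and, Prod.mk.injEq]
  constructor
  · rintro (⟨i, h1, h2⟩ | ⟨⟨i, j⟩, hij, h1, h2⟩)
    · exact Or.inl ⟨i, h1.symm, h2.symm⟩
    · exact Or.inr ⟨i, j, hij, h1.symm, h2.symm⟩
  · rintro (⟨i, h1, h2⟩ | ⟨i, j, hij, h1, h2⟩)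
    · exact Or.inl ⟨i, h1.symm, h2.symm⟩
    · exact Or.inr ⟨(i, j), hij, h1.symm, h2.symm⟩

lemma sc_edge_mem (i : Fin m) : (sNode, cNode i) ∈ scEdges m n C :=
  mem_scEdges.2 (Or.inl ⟨i, rfl, rfl⟩)

lemma sc_edge_mem' {i : Fin m} {j : Fin n} (h : j ∈ C i) :
    (cNode i, xNode j) ∈ scEdges m n C :=
  mem_scEdges.2 (Or.inr ⟨i, j, h, rfl, rfl⟩)

lemma reaches_c {L : Finset (SCNode m n × SCNode m n)} (hL : L ⊆ scEdges m n C) (i : Fin m) :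
    Reaches L {sNode} (cNode i) ↔ (sNode, cNode i) ∈ L := by
  constructor
  · rintro ⟨t, ht, h⟩
    rw [Finset.mem_singleton] at ht; subst ht
    rcases h.cases_tail with h | ⟨c, _, hc⟩
    · exact absurd h (by simp [sNode, cNode])
    · rcases mem_scEdges.1 (hL hc) with ⟨i', h1, h2⟩ | ⟨i', j', _, h1, h2⟩
      · rw [h1] at hc; exact hc
      · exact absurd h2 (by simp [cNode, xNode])
  · intro h
    exact ⟨sNode, Finset.mem_singleton_self _, Relation.ReflTransGen.single h⟩

lemma reaches_x {L : Finset (SCNode m n × SCNode m n)} (hL : L ⊆ scEdges m n C) (j : Fin n) :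
    Reaches L {sNode} (xNode j) ↔
      ∃ i, j ∈ C i ∧ (sNode, cNode i) ∈ L ∧ (cNode i, xNode j) ∈ L := by
  constructor
  · rintro ⟨t, ht, h⟩
    rw [Finset.mem_singleton] at ht; subst ht
    rcases h.cases_tail with h | ⟨c, hsc, hc⟩
    · exact absurd h (by simp [sNode, xNode])
    · rcases mem_scEdges.1 (hL hc) with ⟨i', h1, h2⟩ | ⟨i', j', hij, h1, h2⟩
      · exact absurd h2 (by simp [cNode, xNode])
      · subst h1
        have hj : j = j' := by simpa [xNode] using h2
        subst hj
        exact ⟨i', hij, (reaches_c hL i').1 ⟨sNode, Finset.mem_singleton_self _, hsc⟩, hc⟩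
  · rintro ⟨i, hij, h1, h2⟩
    exact ⟨sNode, Finset.mem_singleton_self _,
      (Relation.ReflTransGen.single h1).tail h2⟩

lemma ap_s (p : SCNode m n × SCNode m n → ℝ) :
    ap (scEdges m n C) p {sNode} sNode = 1 := by
  unfold ap
  have h : ∀ L ∈ (scEdges m n C).powerset,
      edgeWeight (scEdges m n C) p L * (if Reaches L {sNode} sNode then (1:ℝ) else 0)
        = edgeWeight (scEdges m n C) p L := by
    intro L _
    rw [if_pos ⟨sNode, Finset.mem_singleton_self _, Relation.ReflTransGen.refl⟩, mul_one]
  rw [Finset.sum_congr rfl h, edgeWeight_total]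

lemma ap_c (p : SCNode m n × SCNode m n → ℝ) (i : Fin m) :
    ap (scEdges m n C) p {sNode} (cNode i) = p (sNode, cNode i) := by
  unfold ap
  have h : ∀ L ∈ (scEdges m n C).powerset,
      edgeWeight (scEdges m n C) p L * (if Reaches L {sNode} (cNode i) then (1:ℝ) else 0)
        = edgeWeight (scEdges m n C) p L *
            (if (sNode, cNode i) ∈ L then (1:ℝ) else 0) := by
    intro L hL
    rw [if_congr (reaches_c (Finset.mem_powerset.1 hL) i) rfl rfl]
  rw [Finset.sum_congr rfl h,
    marginal (F := {(sNode, cNode i)}) (by simpa using sc_edge_mem i) p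
      (fun L => if (sNode, cNode i) ∈ L then (1:ℝ) else 0) (fun L => by simp),
    sum_singleton_edge]
  simp

lemma ap_x (p : SCNode m n × SCNode m n → ℝ) (j : Fin n) :
    ap (scEdges m n C) p {sNode} (xNode j)
      = 1 - ∏ i ∈ Finset.univ.filter (fun i => j ∈ C i),
          (1 - p (sNode, cNode i) * p (cNode i, xNode j)) := by
  classical
  set D : Finset (Fin m) := Finset.univ.filter (fun i => j ∈ C i) with hD
  set F : Fin m → Finset (SCNode m n × SCNode m n) :=
    fun i => {(sNode, cNode i), (cNode i, xNode j)} with hF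
  have hFsub : D.biUnion F ⊆ scEdges m n C := by
    intro e he
    rcases Finset.mem_biUnion.1 he with ⟨i, hi, hei⟩
    have hij : j ∈ C i := (Finset.mem_filter.1 hi).2
    rcases Finset.mem_insert.1 hei with rfl | hei
    · exact sc_edge_mem i
    · rw [Finset.mem_singleton.1 hei]; exact sc_edge_mem' hij
  have hne_node : ∀ i : Fin m, (sNode : SCNode m n) ≠ cNode i := by
    intro i; simp [sNode, cNode]
  have hdisj : (D : Set (Fin m)).PairwiseDisjoint F := by
    intro a _ b _ hab
    simp only [Function.onFun]
    rw [Finset.disjoint_left]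
    intro e hea heb
    rcases Finset.mem_insert.1 hea with rfl | hea <;>
      rcases Finset.mem_insert.1 heb with h | h <;>
      simp_all [hF, sNode, cNode, xNode, Prod.ext_iff]
  have hedge_ne : ∀ i : Fin m,
      ((sNode : SCNode m n), cNode i) ≠ (cNode i, xNode j) := by
    intro i
    simp [sNode, cNode, xNode, Prod.ext_iff]
  -- the indicator functions
  set h : Fin m → Finset (SCNode m n × SCNode m n) → ℝ :=
    fun i L => if (sNode, cNode i) ∈ L ∧ (cNode i, xNode j) ∈ L then (1:ℝ) else 0 with hh
  have hg_eq : ∀ L : Finset (SCNode m n × SCNode m n),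
      (if (∃ i, j ∈ C i ∧ (sNode, cNode i) ∈ L ∧ (cNode i, xNode j) ∈ L) then (1:ℝ) else 0)
        = 1 - ∏ i ∈ D, (1 - h i L) := by
    intro L
    by_cases hex : ∃ i, j ∈ C i ∧ (sNode, cNode i) ∈ L ∧ (cNode i, xNode j) ∈ L
    · obtain ⟨i, hij, h1, h2⟩ := hex
      have hiD : i ∈ D := Finset.mem_filter.2 ⟨Finset.mem_univ _, hij⟩
      have : ∏ i ∈ D, (1 - h i L) = 0 :=
        Finset.prod_eq_zero hiD (by simp [hh, h1, h2])
      rw [if_pos ⟨i, hij, h1, h2⟩, this]; ring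
    · have : ∏ i ∈ D, (1 - h i L) = 1 := by
        refine Finset.prod_eq_one fun i hi => ?_
        have hij : j ∈ C i := (Finset.mem_filter.1 hi).2
        have : ¬((sNode, cNode i) ∈ L ∧ (cNode i, xNode j) ∈ L) := by
          intro hc; exact hex ⟨i, hij, hc.1, hc.2⟩
        simp [hh, this]
      rw [if_neg hex, this]; ring
  unfold ap
  have step1 : ∀ L ∈ (scEdges m n C).powerset,
      edgeWeight (scEdges m n C) p L * (if Reaches L {sNode} (xNode j) then (1:ℝ) else 0)
        = edgeWeight (scEdges m n C) p L -
            edgeWeight (scEdges m n C) p L * ∏ i ∈ D, (1 - h i L) := by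
    intro L hL
    rw [if_congr (reaches_x (Finset.mem_powerset.1 hL) j) rfl rfl, hg_eq L]
    ring
  rw [Finset.sum_congr rfl step1, Finset.sum_sub_distrib, edgeWeight_total]
  have step2 : ∑ L ∈ (scEdges m n C).powerset,
      edgeWeight (scEdges m n C) p L * ∏ i ∈ D, (1 - h i L)
        = ∏ i ∈ D, (1 - p (sNode, cNode i) * p (cNode i, xNode j)) := by
    have hgdep : ∀ L : Finset (SCNode m n × SCNode m n),
        (∏ i ∈ D, (1 - h i L)) = ∏ i ∈ D, (1 - h i (L ∩ D.biUnion F)) := by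
      intro L
      refine Finset.prod_congr rfl fun i hi => ?_
      have he1 : (sNode, cNode i) ∈ D.biUnion F :=
        Finset.mem_biUnion.2 ⟨i, hi, by simp [hF]⟩
      have he2 : ((cNode i : SCNode m n), xNode j) ∈ D.biUnion F :=
        Finset.mem_biUnion.2 ⟨i, hi, by simp [hF]⟩
      simp only [hh, Finset.mem_inter, he1, he2, and_true]
    rw [marginal hFsub p _ (fun L => hgdep L)]
    have hdep2 : ∀ i ∈ D, ∀ L : Finset (SCNode m n × SCNode m n),
        (fun i L => 1 - h i L) i L = (fun i L => 1 - h i L) i (L ∩ F i) := by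
      intro i _ L
      have he1 : ((sNode : SCNode m n), cNode i) ∈ F i := by simp [hF]
      have he2 : ((cNode i : SCNode m n), xNode j) ∈ F i := by simp [hF]
      simp only [hh, Finset.mem_inter, he1, he2, and_true]
    rw [prod_split D F hdisj p (fun i L => 1 - h i L) hdep2]
    refine Finset.prod_congr rfl fun i hi => ?_
    have hsum : ∑ K ∈ (F i).powerset, edgeWeight (F i) p K * (1 - h i K)
        = (∑ K ∈ (F i).powerset, edgeWeight (F i) p K)
          - ∑ K ∈ (F i).powerset, edgeWeight (F i) p K * h i K := by
      rw [← Finset.sum_sub_distrib]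
      exact Finset.sum_congr rfl fun K _ => by ring
    rw [hsum, edgeWeight_total]
    have := sum_pair_edges (V := SCNode m n) (sNode, cNode i) (cNode i, xNode j)
      (hedge_ne i) p
    rw [show ∑ K ∈ (F i).powerset, edgeWeight (F i) p K * h i K
        = p (sNode, cNode i) * p (cNode i, xNode j) from this]
  rw [step2]

end SCLemmas

lemma spreadOn_eq_sum_ap {V : Type*} [Fintype V] [DecidableEq V]
    (E : Finset (V × V)) (p : V × V → ℝ) (S W : Finset V) :
    spreadOn E p S W = ∑ v ∈ W, ap E p S v := by
  unfold spreadOn ap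
  have h : ∀ L : Finset (V × V), ((W.filter (fun v => Reaches L S v)).card : ℝ)
      = ∑ v ∈ W, if Reaches L S v then (1:ℝ) else 0 := by
    intro L
    rw [Finset.card_filter]
    push_cast
    rfl
  simp_rw [h, Finset.mul_sum]
  rw [Finset.sum_comm]


/-- In the Set Cover reduction graph with seed set `S = {s}`, for every index set
`I ⊆ {1,…,m}` and boost set `B = {c_i : i ∈ I}`, the boosted influence spread is
`σ_{{s}}(B) = 1 + |I| + (m − |I|)/2 + |{j : e_j ∈ ⋃_{i∈I} C_i}|
  + ∑_{j : e_j ∉ ⋃_{i∈I} C_i} (1 − 2^{−d_j})`, where `d_j = |{i : e_j ∈ C_i}|`. -/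
theorem setCover_spread_boost (m n : ℕ) (C : Fin m → Finset (Fin n))
    (hcov : ∀ j : Fin n, ∃ i : Fin m, j ∈ C i) (I : Finset (Fin m)) :
    spread (scEdges m n C) (pB (scP m n) (scP' m n) (I.image cNode))
        ({sNode} : Finset (SCNode m n)) =
      1 + (I.card : ℝ) + ((m : ℝ) - I.card) / 2
        + ((Finset.univ.filter fun j : Fin n => ∃ i ∈ I, j ∈ C i).card : ℝ)
        + ∑ j ∈ Finset.univ.filter fun j : Fin n => ¬∃ i ∈ I, j ∈ C i,
            (1 - (1 / 2 : ℝ) ^ (scDeg C j)) := by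
  classical
  set pb := pB (scP m n) (scP' m n) (I.image cNode) with hpb
  have hinj : Function.Injective (cNode (m := m) (n := n)) := by
    intro a b hab
    simpa [cNode] using hab
  have hpc : ∀ i : Fin m, pb (sNode, cNode i) = if i ∈ I then 1 else 1/2 := by
    intro i
    by_cases hi : i ∈ I
    · simp [hpb, pB, scP', Finset.mem_image_of_mem _ hi, hi]
    · have hni : (cNode i : SCNode m n) ∉ I.image cNode := by
        simp only [Finset.mem_image]
        rintro ⟨a, ha, hac⟩
        exact hi (hinj hac ▸ ha)
      simp [hpb, pB, scP, hni, hi, cNode, sNode]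
  have hpx : ∀ (i : Fin m) (j : Fin n), pb (cNode i, xNode j) = 1 := by
    intro i j
    have hni : (xNode j : SCNode m n) ∉ I.image cNode := by
      simp [Finset.mem_image, xNode, cNode]
    simp [hpb, pB, scP, hni, xNode, cNode]
  rw [spread, spreadOn_eq_sum_ap]
  have hsum : ∑ v ∈ (Finset.univ : Finset (SCNode m n)), ap (scEdges m n C) pb {sNode} v
      = ap (scEdges m n C) pb {sNode} sNode
        + (∑ i : Fin m, ap (scEdges m n C) pb {sNode} (cNode i)
          + ∑ j : Fin n, ap (scEdges m n C) pb {sNode} (xNode j)) := by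
    rw [Fintype.sum_sum_type, Fintype.sum_sum_type, Fintype.sum_unique]
    rfl
  rw [hsum, ap_s pb]
  have hC : ∑ i : Fin m, ap (scEdges m n C) pb {sNode} (cNode i)
      = (I.card : ℝ) + ((m : ℝ) - I.card) / 2 := by
    have h2 : ∀ i : Fin m, ap (scEdges m n C) pb {sNode} (cNode i)
        = 1/2 + (if i ∈ I then (1/2 : ℝ) else 0) := by
      intro i
      rw [ap_c pb i, hpc i]
      by_cases hi : i ∈ I <;> simp [hi] <;> norm_num
    rw [Finset.sum_congr rfl fun i _ => h2 i, Finset.sum_add_distrib, Finset.sum_const,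
      Finset.sum_ite_mem, Finset.univ_inter, Finset.sum_const]
    have hIm : I.card ≤ m := by simpa using I.card_le_univ
    simp only [Finset.card_univ, Fintype.card_fin, nsmul_eq_mul]
    push_cast
    ring
  have hX : ∀ j : Fin n, ap (scEdges m n C) pb {sNode} (xNode j)
      = if (∃ i ∈ I, j ∈ C i) then (1:ℝ) else 1 - (1/2 : ℝ) ^ (scDeg C j) := by
    intro j
    rw [ap_x pb j]
    have hfac : ∀ i ∈ Finset.univ.filter (fun i => j ∈ C i),
        (1 - pb (sNode, cNode i) * pb (cNode i, xNode j))
          = if i ∈ I then (0:ℝ) else 1/2 := by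
      intro i _
      rw [hpc i, hpx i j]
      by_cases hi : i ∈ I <;> simp [hi] <;> norm_num
    rw [Finset.prod_congr rfl hfac]
    by_cases hcov : ∃ i ∈ I, j ∈ C i
    · obtain ⟨i, hiI, hij⟩ := hcov
      have hmem : i ∈ Finset.univ.filter (fun i => j ∈ C i) :=
        Finset.mem_filter.2 ⟨Finset.mem_univ _, hij⟩
      have hz : (∏ x ∈ Finset.univ.filter (fun i => j ∈ C i),
          if x ∈ I then (0:ℝ) else 1/2) = 0 :=
        Finset.prod_eq_zero hmem (by simp [hiI])
      rw [hz, if_pos ⟨i, hiI, hij⟩]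
      ring
    · have hall : ∀ i ∈ Finset.univ.filter (fun i => j ∈ C i),
          (if i ∈ I then (0:ℝ) else 1/2) = 1/2 := fun i hi =>
        if_neg (fun hiI => hcov ⟨i, hiI, (Finset.mem_filter.1 hi).2⟩)
      rw [Finset.prod_congr rfl hall, Finset.prod_const, if_neg hcov, scDeg]
  have hXsum : ∑ j : Fin n, ap (scEdges m n C) pb {sNode} (xNode j)
      = ((Finset.univ.filter fun j : Fin n => ∃ i ∈ I, j ∈ C i).card : ℝ)
        + ∑ j ∈ Finset.univ.filter fun j : Fin n => ¬∃ i ∈ I, j ∈ C i,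
            (1 - (1 / 2 : ℝ) ^ (scDeg C j)) := by
    rw [Finset.sum_congr rfl fun j _ => hX j, Finset.sum_ite, Finset.sum_const,
      nsmul_eq_mul, mul_one]
  rw [hC, hXsum]
  ring

end
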